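/- Theorem (norm-equivalence of robustness curves for linear classifiers): For any linear classifier f(x) = sgn(⟨w, x⟩ + b) with w ≠ 0, there exist constants c, c' > 0 such that for all ε ≥ 0, L_{ℓ¹,ε}(f) = L_{ℓ²,ε/c}(f) = L_{ℓ∞,ε/c'}(f). -/
import Mathlib


open Finset MeasureTheory

noncomputable def l1 {d : ℕ} (x : Fin d → ℝ) : ℝ := ∑ i, |x i|
noncomputable def l2 {d : ℕ} (x : Fin d → ℝ) : ℝ := Real.sqrt (∑ i, (x i) ^ 2)
noncomputable def linf {d : ℕ} (x : Fin d → ℝ) : ℝ := ⨆ i, |x i|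

/-- The linear classifier `x ↦ sgn(⟨w, x⟩ + b)` with values in `{-1, 1} ⊆ ℝ`. -/
noncomputable def linClass {d : ℕ} (w : Fin d → ℝ) (b : ℝ) (x : Fin d → ℝ) : ℝ :=
  if 0 ≤ (∑ i, w i * x i) + b then 1 else -1

/-- The `ε`-adversarial loss of a classifier `f`. -/
noncomputable def advLoss {d : ℕ}
    (P : Measure ((Fin d → ℝ) × ℝ)) (n : (Fin d → ℝ) → ℝ) (f : (Fin d → ℝ) → ℝ)
    (ε : ℝ) : ENNReal :=
  P {p | ∃ x' : Fin d → ℝ, n (p.1 - x') ≤ ε ∧ f x' ≠ p.2}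

lemma linClass_val {d : ℕ} (w : Fin d → ℝ) (b : ℝ) (x : Fin d → ℝ) :
    linClass w b x = 1 ∨ linClass w b x = -1 := by
  unfold linClass; split <;> simp

/-- Key lemma: characterization of attackable points for a linear classifier,
depending on the norm only through the dual norm `N` of `w`. -/
lemma attack_iff {d : ℕ} (w : Fin d → ℝ) (b : ℝ)
    (n : (Fin d → ℝ) → ℝ) (N : ℝ) (hN : 0 ≤ N)
    (hzero : n 0 = 0)
    (hsymm : ∀ v, n (-v) = n v)
    (hHolder : ∀ u, ∑ i, w i * u i ≤ N * n u)
    (hAtt : ∀ ε : ℝ, 0 ≤ ε → ∃ u, n u ≤ ε ∧ ∑ i, w i * u i = ε * N)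
    (ε : ℝ) (hε : 0 ≤ ε) (x : Fin d → ℝ) (y : ℝ) :
    (∃ x', n (x - x') ≤ ε ∧ linClass w b x' ≠ y) ↔
      ((y = 1 ∧ (∑ i, w i * x i) + b < ε * N) ∨
       (y = -1 ∧ -(ε * N) ≤ (∑ i, w i * x i) + b) ∨
       (y ≠ 1 ∧ y ≠ -1)) := by
  constructor
  · rintro ⟨x', hn, hne⟩
    by_cases hy1 : y = 1
    · left
      refine ⟨hy1, ?_⟩
      have hlt : (∑ i, w i * x' i) + b < 0 := by
        by_contra h
        push_neg at h
        exact hne (by rw [hy1]; unfold linClass; rw [if_pos h])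
      have hx' : ∑ i, w i * x' i = ∑ i, w i * x i - ∑ i, w i * (x - x') i := by
        simp [Pi.sub_apply, mul_sub, Finset.sum_sub_distrib]
      have key : ∑ i, w i * (x - x') i ≤ ε * N := by
        calc ∑ i, w i * (x - x') i ≤ N * n (x - x') := hHolder _
          _ ≤ N * ε := mul_le_mul_of_nonneg_left hn hN
          _ = ε * N := mul_comm _ _
      linarith
    · by_cases hy2 : y = -1
      · right; left
        refine ⟨hy2, ?_⟩
        have hge : 0 ≤ (∑ i, w i * x' i) + b := by
          by_contra h
          push_neg at h
          exact hne (by rw [hy2]; unfold linClass; rw [if_neg (not_le.mpr h)])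
        have hx' : ∑ i, w i * x' i = ∑ i, w i * x i - ∑ i, w i * (x - x') i := by
          simp [Pi.sub_apply, mul_sub, Finset.sum_sub_distrib]
        have key : ∑ i, w i * ((x' - x) i) ≤ ε * N := by
          calc ∑ i, w i * (x' - x) i ≤ N * n (x' - x) := hHolder _
            _ = N * n (x - x') := by rw [← hsymm (x - x'), neg_sub]
            _ ≤ N * ε := mul_le_mul_of_nonneg_left hn hN
            _ = ε * N := mul_comm _ _
        have hsplit : ∑ i, w i * (x' - x) i
            = ∑ i, w i * x' i - ∑ i, w i * x i := by
          simp [Pi.sub_apply, mul_sub, Finset.sum_sub_distrib]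
        linarith
      · right; right; exact ⟨hy1, hy2⟩
  · rintro (⟨hy, hs⟩ | ⟨hy, hs⟩ | ⟨hy1, hy2⟩)
    · obtain ⟨u, hu, hsum⟩ := hAtt ε hε
      refine ⟨x - u, by rwa [sub_sub_cancel], ?_⟩
      have hval : ∑ i, w i * (x - u) i = ∑ i, w i * x i - ∑ i, w i * u i := by
        simp [Pi.sub_apply, mul_sub, Finset.sum_sub_distrib]
      have : (∑ i, w i * (x - u) i) + b < 0 := by rw [hval]; linarith
      rw [hy]
      unfold linClass
      rw [if_neg (not_le.mpr this)]
      norm_num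
    · obtain ⟨u, hu, hsum⟩ := hAtt ε hε
      refine ⟨x + u, ?_, ?_⟩
      · have : x - (x + u) = -u := by ring
        rw [this, hsymm]; exact hu
      · have hval : ∑ i, w i * (x + u) i = ∑ i, w i * x i + ∑ i, w i * u i := by
          simp [Pi.add_apply, mul_add, Finset.sum_add_distrib]
        have : 0 ≤ (∑ i, w i * (x + u) i) + b := by rw [hval]; linarith
        rw [hy]
        unfold linClass
        rw [if_pos this]
        norm_num
    · refine ⟨x, by rw [sub_self, hzero]; exact hε, ?_⟩
      rcases linClass_val w b x with h | h <;> rw [h] <;>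
        [exact fun hc => hy1 hc.symm; exact fun hc => hy2 hc.symm]

theorem linear_robustness_curves_norm_equivalent {d : ℕ}
    (P : Measure ((Fin d → ℝ) × ℝ)) [IsProbabilityMeasure P]
    (hlabels : P {p | p.2 = 1 ∨ p.2 = -1} = 1)
    (w : Fin d → ℝ) (hw : w ≠ 0) (b : ℝ) :
    ∃ c c' : ℝ, 0 < c ∧ 0 < c' ∧
      ∀ ε : ℝ, 0 ≤ ε →
        advLoss P l1 (linClass w b) ε = advLoss P l2 (linClass w b) (ε / c) ∧
        advLoss P l1 (linClass w b) ε = advLoss P linf (linClass w b) (ε / c') := by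
  -- d > 0
  haveI hne : Nonempty (Fin d) := by
    by_contra h
    exact hw (funext fun i => absurd ⟨i⟩ h)
  obtain ⟨i₀, hi₀⟩ : ∃ i, w i ≠ 0 := by
    by_contra h
    push_neg at h
    exact hw (funext h)
  -- an index attaining the max of |w i|
  obtain ⟨im, him⟩ : ∃ im, ∀ i, |w i| ≤ |w im| :=
    Finite.exists_max (fun i => |w i|)
  have hbdd : ∀ v : Fin d → ℝ, BddAbove (Set.range fun i => |v i|) := fun v =>
    (Set.finite_range _).bddAbove
  have hlinf_eq : linf w = |w im| :=
    le_antisymm (ciSup_le him) (le_ciSup (hbdd w) im)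
  have hlinf_pos : 0 < linf w := by
    rw [hlinf_eq]
    exact lt_of_lt_of_le (abs_pos.mpr hi₀) (him i₀) |>.trans_le (le_refl _) |>.trans_le (le_refl _)
  have hl2_pos : 0 < l2 w := by
    apply Real.sqrt_pos.mpr
    apply Finset.sum_pos' (fun i _ => sq_nonneg _) ⟨i₀, Finset.mem_univ _, by positivity⟩
  have hl1_pos : 0 < l1 w := by
    apply Finset.sum_pos' (fun i _ => abs_nonneg _) ⟨i₀, Finset.mem_univ _, abs_pos.mpr hi₀⟩
  -- facts about the three norms
  have hl1_zero : l1 (0 : Fin d → ℝ) = 0 := by simp [l1]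
  have hl2_zero : l2 (0 : Fin d → ℝ) = 0 := by simp [l2]
  have hlinf_zero : linf (0 : Fin d → ℝ) = 0 := by simp [linf, ciSup_const]
  have hl1_symm : ∀ v : Fin d → ℝ, l1 (-v) = l1 v := fun v => by simp [l1]
  have hl2_symm : ∀ v : Fin d → ℝ, l2 (-v) = l2 v := fun v => by simp [l2]
  have hlinf_symm : ∀ v : Fin d → ℝ, linf (-v) = linf v := fun v => by simp [linf]
  -- Hölder inequalities
  have hH1 : ∀ u : Fin d → ℝ, ∑ i, w i * u i ≤ linf w * l1 u := by
    intro u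
    calc ∑ i, w i * u i ≤ ∑ i, |w i * u i| :=
          Finset.sum_le_sum fun i _ => le_abs_self _
      _ = ∑ i, |w i| * |u i| := by simp [abs_mul]
      _ ≤ ∑ i, linf w * |u i| :=
          Finset.sum_le_sum fun i _ =>
            mul_le_mul_of_nonneg_right (le_ciSup (hbdd w) i) (abs_nonneg _)
      _ = linf w * l1 u := by rw [l1, Finset.mul_sum]
  have hH2 : ∀ u : Fin d → ℝ, ∑ i, w i * u i ≤ l2 w * l2 u := by
    intro u
    calc ∑ i, w i * u i ≤ |∑ i, w i * u i| := le_abs_self _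
      _ = Real.sqrt ((∑ i, w i * u i) ^ 2) := (Real.sqrt_sq_eq_abs _).symm
      _ ≤ Real.sqrt ((∑ i, w i ^ 2) * (∑ i, u i ^ 2)) := by
          apply Real.sqrt_le_sqrt
          exact Finset.sum_mul_sq_le_sq_mul_sq Finset.univ w u
      _ = l2 w * l2 u := by
          rw [l2, l2, ← Real.sqrt_mul (Finset.sum_nonneg fun i _ => sq_nonneg _)]
  have hHinf : ∀ u : Fin d → ℝ, ∑ i, w i * u i ≤ l1 w * linf u := by
    intro u
    have hnn : 0 ≤ linf u := le_trans (abs_nonneg _) (le_ciSup (hbdd u) (Classical.arbitrary _))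
    calc ∑ i, w i * u i ≤ ∑ i, |w i| * |u i| := by
          apply Finset.sum_le_sum fun i _ => ?_
          calc w i * u i ≤ |w i * u i| := le_abs_self _
            _ = |w i| * |u i| := abs_mul _ _
      _ ≤ ∑ i, |w i| * linf u :=
          Finset.sum_le_sum fun i _ =>
            mul_le_mul_of_nonneg_left (le_ciSup (hbdd u) i) (abs_nonneg _)
      _ = l1 w * linf u := by rw [l1, Finset.sum_mul]
  -- attainment
  have hA1 : ∀ ε : ℝ, 0 ≤ ε → ∃ u : Fin d → ℝ, l1 u ≤ ε ∧ ∑ i, w i * u i = ε * linf w := by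
    intro ε hε
    refine ⟨fun j => if j = im then (if 0 ≤ w im then ε else -ε) else 0, ?_, ?_⟩
    · have : l1 (fun j => if j = im then (if 0 ≤ w im then ε else -ε) else 0) =
          |if 0 ≤ w im then ε else -ε| := by
        rw [l1]
        rw [Finset.sum_eq_single im]
        · simp
        · intro j _ hj; simp [hj]
        · simp
      rw [this]
      split <;> simp [abs_of_nonneg hε, hε]
    · rw [Finset.sum_eq_single im]
      · rw [hlinf_eq]
        show w im * (if im = im then (if 0 ≤ w im then ε else -ε) else 0) = ε * |w im|
        rw [if_pos rfl]
        rcases le_or_gt 0 (w im) with h | h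
        · rw [if_pos h, abs_of_nonneg h]; ring
        · rw [if_neg (not_le.mpr h), abs_of_neg h]; ring
      · intro j _ hj; simp [hj]
      · simp
  have hA2 : ∀ ε : ℝ, 0 ≤ ε → ∃ u : Fin d → ℝ, l2 u ≤ ε ∧ ∑ i, w i * u i = ε * l2 w := by
    intro ε hε
    set c := ε / l2 w with hc_def
    have hc : 0 ≤ c := div_nonneg hε hl2_pos.le
    have hcc : c * l2 w = ε := div_mul_cancel₀ _ (ne_of_gt hl2_pos)
    have hsq : l2 w ^ 2 = ∑ i, w i ^ 2 := Real.sq_sqrt (Finset.sum_nonneg fun i _ => sq_nonneg _)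
    have hkey : ∑ i, (c * w i) ^ 2 = c ^ 2 * ∑ i, w i ^ 2 := by
      rw [Finset.mul_sum]; exact Finset.sum_congr rfl fun i _ => by ring
    refine ⟨fun j => c * w j, ?_, ?_⟩
    · have hval : l2 (fun j => c * w j) = c * l2 w := by
        have h1 : l2 (fun j => c * w j) = Real.sqrt (∑ i, (c * w i) ^ 2) := rfl
        rw [h1, hkey, Real.sqrt_mul (sq_nonneg _), Real.sqrt_sq hc]
        rfl
      rw [hval, hcc]
    · have h2 : ∑ i, w i * (c * w i) = c * ∑ i, w i ^ 2 := by
        rw [Finset.mul_sum]; exact Finset.sum_congr rfl fun i _ => by ring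
      rw [h2, ← hsq, show c * l2 w ^ 2 = (c * l2 w) * l2 w from by ring, hcc]
  have hAinf : ∀ ε : ℝ, 0 ≤ ε → ∃ u : Fin d → ℝ, linf u ≤ ε ∧ ∑ i, w i * u i = ε * l1 w := by
    intro ε hε
    refine ⟨fun j => if 0 ≤ w j then ε else -ε, ?_, ?_⟩
    · apply ciSup_le
      intro j
      show |if 0 ≤ w j then ε else -ε| ≤ ε
      split <;> simp [abs_of_nonneg hε, hε]
    · rw [l1, Finset.mul_sum]
      apply Finset.sum_congr rfl
      intro i _
      show w i * (if 0 ≤ w i then ε else -ε) = ε * |w i|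
      rcases le_or_gt 0 (w i) with h | h
      · rw [if_pos h, abs_of_nonneg h]; ring
      · rw [if_neg (not_le.mpr h), abs_of_neg h]; ring
  -- constants
  refine ⟨l2 w / linf w, l1 w / linf w, div_pos hl2_pos hlinf_pos, div_pos hl1_pos hlinf_pos,
    fun ε hε => ?_⟩
  have hε2 : 0 ≤ ε / (l2 w / linf w) := div_nonneg hε (div_pos hl2_pos hlinf_pos).le
  have hεi : 0 ≤ ε / (l1 w / linf w) := div_nonneg hε (div_pos hl1_pos hlinf_pos).le
  have h2ne := ne_of_gt hl2_pos
  have h1ne := ne_of_gt hl1_pos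
  have hine := ne_of_gt hlinf_pos
  have hT2 : (ε / (l2 w / linf w)) * l2 w = ε * linf w := by field_simp
  have hTi : (ε / (l1 w / linf w)) * l1 w = ε * linf w := by field_simp
  constructor
  · unfold advLoss
    congr 1
    ext p
    simp only [Set.mem_setOf_eq]
    rw [attack_iff w b l1 (linf w) hlinf_pos.le hl1_zero hl1_symm hH1 hA1 ε hε,
        attack_iff w b l2 (l2 w) hl2_pos.le hl2_zero hl2_symm hH2 hA2 _ hε2, hT2]
  · unfold advLoss
    congr 1
    ext p
    simp only [Set.mem_setOf_eq]
    rw [attack_iff w b l1 (linf w) hlinf_pos.le hl1_zero hl1_symm hH1 hA1 ε hε,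
        attack_iff w b linf (l1 w) hl1_pos.le hlinf_zero hlinf_symm hHinf hAinf _ hεi, hTi]
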